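/- With the same setting and constants, for every i ≥ 1 and positive integer m: P(Dᵢ < m(μ₀−a)/4) ≤ exp(−(a−μ₀)²·i/(16c₁) − (a−μ₀)²·m/(16c₁)), and hence ∑_{i=1}^∞ P(Dᵢ < m(μ₀−a)/4) ≤ exp(−(a−μ₀)²·m/(16c₁)) / (exp((a−μ₀)²/(16c₁)) − 1). -/

import Mathlib

set_option maxHeartbeats 1000000


open MeasureTheory ProbabilityTheory Real

/-- In the same setting as Statement 4, for every i ≥ 1 and positive
integer m, P(Dᵢ < m(μ₀−a)/4) ≤ exp(−(a−μ₀)²·i/(16c₁) − (a−μ₀)²·m/(16c₁)), and hence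
∑_{i=1}^∞ P(Dᵢ < m(μ₀−a)/4) ≤ exp(−(a−μ₀)²·m/(16c₁)) / (exp((a−μ₀)²/(16c₁)) − 1). -/
theorem stmt5 {Ω : Type*} [MeasurableSpace Ω] (P : Measure Ω) [IsProbabilityMeasure P]
    (Θ : Set ℝ) (hopen : IsOpen Θ) (hconv : Convex ℝ Θ)
    (Ψ Ψ' Ψ'' : ℝ → ℝ) (μ₀ a θa : ℝ)
    (hsub : Set.Icc 0 θa ⊆ Θ)
    (hderiv1 : ∀ θ ∈ Θ, HasDerivAt Ψ (Ψ' θ) θ)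
    (hderiv2 : ∀ θ ∈ Θ, HasDerivAt Ψ' (Ψ'' θ) θ)
    (hpos : ∀ θ ∈ Θ, 0 < Ψ'' θ)
    (hcont : ContinuousOn Ψ'' (Set.Icc 0 θa))
    (hΨ0 : Ψ 0 = 0) (hΨ'0 : Ψ' 0 = μ₀) (hΨ'θa : Ψ' θa = a)
    (ha : μ₀ < a) (hθa : 0 < θa)
    (ξ : ℕ → Ω → ℝ) (hmeas : ∀ i, Measurable (ξ i))
    (hindep : iIndepFun ξ P)
    (hident : ∀ i, Measure.map (ξ i) P = Measure.map (ξ 0) P)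
    (hmgf : ∀ i, ∀ r : ℝ, 0 < r → r ≤ θa →
      mgf (ξ i) P (-r) = exp (-(Ψ θa - Ψ r - Ψ (θa - r))))
    (D : ℕ → Ω → ℝ) (hD : ∀ k ω, D k ω = ∑ i ∈ Finset.range k, ξ i ω)
    (m : ℕ) (hm : 1 ≤ m)
    (c₁ : ℝ) (hc₁ : c₁ = max ((a - μ₀) / (4 * θa)) (sSup (Ψ'' '' Set.Icc 0 θa))) :
    (∀ i : ℕ, 1 ≤ i →
        (P {ω | D i ω < m * (μ₀ - a) / 4}).toReal ≤
          exp (-(a - μ₀) ^ 2 * i / (16 * c₁) - (a - μ₀) ^ 2 * m / (16 * c₁))) ∧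
      (∑' i : ℕ, (P {ω | D (i + 1) ω < m * (μ₀ - a) / 4}).toReal) ≤
        exp (-(a - μ₀) ^ 2 * m / (16 * c₁)) / (exp ((a - μ₀) ^ 2 / (16 * c₁)) - 1) := by
  have hc₁1 : (a - μ₀) / (4 * θa) ≤ c₁ := hc₁ ▸ le_max_left _ _
  have hc₁pos : 0 < c₁ := lt_of_lt_of_le (div_pos (by linarith) (by linarith)) hc₁1
  have hc₁sup : ∀ θ ∈ Set.Icc 0 θa, Ψ'' θ ≤ c₁ := by
    intro θ hθ
    rw [hc₁]
    exact le_trans (le_csSup ((isCompact_Icc.image_of_continuousOn hcont).bddAbove)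
      ⟨θ, hθ, rfl⟩) (le_max_right _ _)
  set r : ℝ := (a - μ₀) / (4 * c₁) with hrdef
  have hrpos : 0 < r := div_pos (by linarith) (by linarith)
  have hrc₁ : r * c₁ = (a - μ₀) / 4 := by rw [hrdef]; field_simp
  have hrθa : r ≤ θa := by
    rw [hrdef, div_le_iff₀ (by positivity)]
    rw [div_le_iff₀ (by positivity)] at hc₁1
    nlinarith
  have hcΨ : ContinuousOn Ψ (Set.Icc 0 θa) := fun x hx =>
    ((hderiv1 x (hsub hx)).continuousAt).continuousWithinAt
  have hcΨ' : ContinuousOn Ψ' (Set.Icc 0 θa) := fun x hx =>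
    ((hderiv2 x (hsub hx)).continuousAt).continuousWithinAt
  have key : ∀ x y, 0 ≤ x → x < y → y ≤ θa →
      (0 ≤ Ψ' y - Ψ' x ∧ Ψ' y - Ψ' x ≤ c₁ * (y - x)) := by
    intro x y hx hxy hy
    have hsub' : Set.Icc x y ⊆ Set.Icc 0 θa := Set.Icc_subset_Icc hx hy
    obtain ⟨c, hc, hceq⟩ := exists_hasDerivAt_eq_slope Ψ' Ψ'' hxy (hcΨ'.mono hsub')
      (fun z hz => hderiv2 z (hsub (hsub' (Set.Ioo_subset_Icc_self hz))))
    have hcmem : c ∈ Set.Icc 0 θa := hsub' (Set.Ioo_subset_Icc_self hc)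
    have h1 : 0 < Ψ'' c := hpos c (hsub hcmem)
    have h2 : Ψ'' c ≤ c₁ := hc₁sup c hcmem
    rw [eq_div_iff (by linarith : y - x ≠ 0)] at hceq
    constructor <;> nlinarith
  have mono : ∀ x y, 0 ≤ x → x ≤ y → y ≤ θa → Ψ' x ≤ Ψ' y := by
    intro x y hx hxy hy
    rcases eq_or_lt_of_le hxy with h | h
    · rw [h]
    · linarith [(key x y hx h hy).1]
  have slope : ∀ x y, 0 ≤ x → x < y → y ≤ θa →
      ((y - x) * Ψ' x ≤ Ψ y - Ψ x ∧ Ψ y - Ψ x ≤ (y - x) * Ψ' y) := by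
    intro x y hx hxy hy
    have hsub' : Set.Icc x y ⊆ Set.Icc 0 θa := Set.Icc_subset_Icc hx hy
    obtain ⟨c, hc, hceq⟩ := exists_hasDerivAt_eq_slope Ψ Ψ' hxy (hcΨ.mono hsub')
      (fun z hz => hderiv1 z (hsub (hsub' (Set.Ioo_subset_Icc_self hz))))
    have h1 : Ψ' x ≤ Ψ' c := mono x c hx hc.1.le (le_trans hc.2.le hy)
    have h2 : Ψ' c ≤ Ψ' y := mono c y (le_trans hx hc.1.le) hc.2.le hy
    rw [eq_div_iff (by linarith : y - x ≠ 0)] at hceq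
    constructor <;> nlinarith
  set K : ℝ := Ψ θa - Ψ r - Ψ (θa - r) with hK
  set α : ℝ := (a - μ₀) ^ 2 / (16 * c₁) with hα
  have hαpos : 0 < α := div_pos (pow_pos (by linarith) 2) (by linarith)
  have hαeq : α = r * (a - μ₀) / 4 := by rw [hα, hrdef]; field_simp; ring
  have hKα : α ≤ K := by
    have h1 := (slope (θa - r) θa (by linarith) (by linarith) le_rfl).1
    have h2 := (slope 0 r le_rfl hrpos hrθa).2
    have h3 := (key (θa - r) θa (by linarith) (by linarith) le_rfl).2
    have h4 := (key 0 r le_rfl hrpos hrθa).2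
    rw [hΨ'θa] at h3; rw [hΨ'0] at h4; rw [hΨ0] at h2
    -- h1 : r * Ψ'(θa - r) ≤ Ψ θa - Ψ(θa - r)
    -- h2 : Ψ r - 0 ≤ r * Ψ' r
    -- h3 : a - Ψ'(θa - r) ≤ c₁ * r
    -- h4 : Ψ' r - μ₀ ≤ c₁ * r
    rw [hK, hαeq]
    nlinarith [mul_le_mul_of_nonneg_left h3 hrpos.le, mul_le_mul_of_nonneg_left h4 hrpos.le]
  have hintξ : ∀ j, Integrable (fun ω => exp (-r * ξ j ω)) P := by
    intro j
    by_contra h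
    have h0 : mgf (ξ j) P (-r) = 0 := integral_undef h
    rw [hmgf j r hrpos hrθa] at h0
    exact (exp_pos _).ne' h0
  have hboundi : ∀ i : ℕ, (P {ω | D i ω < ↑m * (μ₀ - a) / 4}).toReal ≤
      exp (r * (↑m * (μ₀ - a) / 4)) * exp (-(K * i)) := by
    intro i
    have hDeq : D i = ∑ j ∈ Finset.range i, ξ j := by
      funext ω; rw [hD]; simp
    have hintD : Integrable (fun ω => exp (-r * (∑ j ∈ Finset.range i, ξ j) ω)) P :=
      hindep.integrable_exp_mul_sum hmeas (fun j _ => hintξ j)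
    have hmono : (P {ω | D i ω < ↑m * (μ₀ - a) / 4}).toReal ≤
        (P {ω | (∑ j ∈ Finset.range i, ξ j) ω ≤ ↑m * (μ₀ - a) / 4}).toReal := by
      apply ENNReal.toReal_mono (measure_ne_top _ _)
      apply measure_mono
      intro ω hω
      simp only [Set.mem_setOf_eq] at *
      rw [← hDeq]
      exact hω.le
    refine hmono.trans ((measure_le_le_exp_mul_mgf (↑m * (μ₀ - a) / 4)
      (by linarith : -r ≤ 0) hintD).trans_eq ?_)
    rw [hindep.mgf_sum hmeas]
    have hprod : ∀ j ∈ Finset.range i, mgf (ξ j) P (-r) = exp (-K) :=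
      fun j _ => hmgf j r hrpos hrθa
    rw [Finset.prod_congr rfl hprod, Finset.prod_const, Finset.card_range,
      ← Real.exp_nat_mul]
    congr 1 <;> ring
  have part1 : ∀ i : ℕ, 1 ≤ i →
      (P {ω | D i ω < ↑m * (μ₀ - a) / 4}).toReal ≤
        exp (-(a - μ₀) ^ 2 * ↑i / (16 * c₁) - (a - μ₀) ^ 2 * ↑m / (16 * c₁)) := by
    intro i _
    refine (hboundi i).trans ?_
    rw [← exp_add]
    apply exp_le_exp.mpr
    have e1 : -(a - μ₀) ^ 2 * (i : ℝ) / (16 * c₁) = -(α * i) := by rw [hα]; ring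
    have e2 : (a - μ₀) ^ 2 * (m : ℝ) / (16 * c₁) = α * m := by rw [hα]; ring
    have e3 : r * (↑m * (μ₀ - a) / 4) = -(α * m) := by rw [hαeq]; ring
    rw [e1, e2, e3]
    have : α * i ≤ K * i := mul_le_mul_of_nonneg_right hKα (Nat.cast_nonneg i)
    linarith
  refine ⟨part1, ?_⟩
  set x : ℝ := exp (-α) with hx
  have hxpos : 0 < x := exp_pos _
  have hx1 : x < 1 := exp_lt_one_iff.mpr (by linarith)
  have hf : ∀ i : ℕ, exp (-(a - μ₀) ^ 2 * (↑(i + 1) : ℝ) / (16 * c₁) -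
      (a - μ₀) ^ 2 * ↑m / (16 * c₁)) = (exp (-(α * m)) * x) * x ^ i := by
    intro i
    rw [hx, ← Real.exp_nat_mul, ← exp_add, ← exp_add]
    congr 1
    push_cast
    rw [hα]
    field_simp
    ring
  have hsumf : Summable (fun i : ℕ => (exp (-(α * m)) * x) * x ^ i) :=
    (summable_geometric_of_lt_one hxpos.le hx1).mul_left _
  have hle : ∀ i : ℕ, (P {ω | D (i + 1) ω < ↑m * (μ₀ - a) / 4}).toReal ≤
      (exp (-(α * m)) * x) * x ^ i := by
    intro i
    have := part1 (i + 1) (Nat.le_add_left 1 i)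
    rwa [hf i] at this
  have hsumL : Summable (fun i : ℕ => (P {ω | D (i + 1) ω < ↑m * (μ₀ - a) / 4}).toReal) :=
    Summable.of_nonneg_of_le (fun i => ENNReal.toReal_nonneg) hle hsumf
  refine (Summable.tsum_le_tsum hle hsumL hsumf).trans_eq ?_
  rw [tsum_mul_left, tsum_geometric_of_lt_one hxpos.le hx1]
  have h1x : 0 < 1 - x := by linarith
  have heα : exp α * x = 1 := by rw [hx, ← exp_add]; simp
  have hden : 0 < exp α - 1 := by nlinarith
  have e2 : exp (-(a - μ₀) ^ 2 * ↑m / (16 * c₁)) = exp (-(α * m)) := by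
    congr 1; rw [hα]; ring
  have e3 : exp ((a - μ₀) ^ 2 / (16 * c₁)) = exp α := by rw [hα]
  rw [e2, e3, mul_assoc, div_eq_mul_inv]
  congr 1
  have h1 : (1 : ℝ) - x ≠ 0 := by linarith
  have h2 : exp α - 1 ≠ 0 := by linarith
  field_simp
  nlinarith [heα]
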